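/- Let G have n ≥ 2 vertices, arboricity at most λ, and let d > 2λ. Then the number ℓ of nonempty layers in the H-partition produced by the greedy peeling algorithm satisfies ℓ ≤ 1 + log n / log(d/(2λ)), i.e., ℓ = O(log n / log(d/λ)). -/

import Mathlib

def HasArboricityAtMost {V : Type*} (G : SimpleGraph V) (lam : ℕ) : Prop :=
  ∃ F : Fin lam → SimpleGraph V,
    (∀ i, (F i).IsAcyclic) ∧ (∀ i, F i ≤ G) ∧
    (∀ e ∈ G.edgeSet, ∃! i, e ∈ (F i).edgeSet)

/-- The greedy peeling process: `peel G d ℓ = ∅` means the H-partition has at most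
`ℓ` (nonempty) layers. -/
def peel {V : Type*} [Fintype V] [DecidableEq V] (G : SimpleGraph V)
    [DecidableRel G.Adj] (d : ℕ) : ℕ → Finset V
  | 0 => Finset.univ
  | i + 1 => (peel G d i).filter (fun v => d < (G.neighborFinset v ∩ peel G d i).card)

open SimpleGraph Finset

section Forest
variable {W : Type*} [DecidableEq W] (H : SimpleGraph W)

noncomputable def rootW (x : W) : W := (H.connectedComponentMk x).out

omit [DecidableEq W] in
lemma reach_rootW (x : W) : H.Reachable x (rootW H x) := by
  have h : H.connectedComponentMk (rootW H x) = H.connectedComponentMk x :=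
    (H.connectedComponentMk x).out_eq
  exact (SimpleGraph.ConnectedComponent.eq.mp h).symm

noncomputable def toRootW (x : W) : H.Path x (rootW H x) :=
  ((reach_rootW H x).some).toPath

noncomputable def nxtW (x : W) : W := (toRootW H x).1.getVert 1

lemma forest_edge_mem {u v : W} (hac : H.IsAcyclic) (h : H.Adj u v) :
    s(u, v) = s(u, nxtW H u) ∨ s(u, v) = s(v, nxtW H v) := by
  have hroot : rootW H v = rootW H u := by
    unfold rootW
    rw [ConnectedComponent.connectedComponentMk_eq_of_adj h]
  set p : H.Path u (rootW H u) := toRootW H u with hp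
  by_cases hv : v ∈ p.1.support
  · left
    have ht : (p.1.takeUntil v hv).IsPath := p.2.takeUntil hv
    have hsingle : (⟨p.1.takeUntil v hv, ht⟩ : H.Path u v) =
        ⟨Walk.cons h Walk.nil, by simp [h.ne]⟩ := hac.path_unique _ _
    have hval : p.1.takeUntil v hv = Walk.cons h Walk.nil :=
      congrArg Subtype.val hsingle
    have hspec := p.1.take_spec hv
    rw [hval] at hspec
    have : p.1.getVert 1 = v := by
      rw [← hspec, Walk.cons_append, Walk.getVert_cons_succ, Walk.nil_append,
        Walk.getVert_zero]
    rw [nxtW, ← hp, this]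
  · right
    have hcons : (Walk.cons h.symm p.1).IsPath := p.2.cons hv
    set q : H.Path v (rootW H v) := toRootW H v with hq
    have hq' : (q.1.copy rfl hroot).IsPath := (Walk.isPath_copy _ _ _).mpr q.2
    have huniq : (⟨q.1.copy rfl hroot, hq'⟩ : H.Path v (rootW H u)) =
        ⟨Walk.cons h.symm p.1, hcons⟩ := hac.path_unique _ _
    have hval : q.1.copy rfl hroot = Walk.cons h.symm p.1 :=
      congrArg Subtype.val huniq
    have : q.1.getVert 1 = u := by
      have := congrArg (fun w => Walk.getVert w 1) hval
      simpa [Walk.getVert_copy, Walk.getVert_cons_succ, Walk.getVert_zero] using this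
    rw [nxtW, ← hq, this, Sym2.eq_swap]

lemma forest_card_edge [Fintype W] [DecidableRel H.Adj]
    (hac : H.IsAcyclic) : H.edgeFinset.card ≤ Fintype.card W := by
  classical
  have key : ∀ e ∈ H.edgeFinset, ∃ x, e = s(x, nxtW H x) := by
    intro e he
    rw [mem_edgeFinset] at he
    induction e using Sym2.ind with
    | _ u v =>
      rcases forest_edge_mem H hac (H.mem_edgeSet.mp he) with h1 | h1
      exacts [⟨u, h1⟩, ⟨v, h1⟩]
  have hle := Finset.card_le_card_of_injOn
    (f := fun e => if hx : ∃ x, e = s(x, nxtW H x) then hx.choose else (Quot.out e).1)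
    (fun _ _ => mem_univ _) ?_ (s := H.edgeFinset) (t := univ)
  · simpa using hle
  · intro e1 h1 e2 h2 hf
    have k1 := key e1 h1; have k2 := key e2 h2
    simp only [dif_pos k1, dif_pos k2] at hf
    rw [k1.choose_spec, k2.choose_spec, hf]

end Forest

lemma forest_pairs_bound {V : Type*} [Fintype V] [DecidableEq V] (F : SimpleGraph V)
    [DecidableRel F.Adj] (hac : F.IsAcyclic) (S : Finset V) :
    ((S ×ˢ S).filter fun p => F.Adj p.1 p.2).card ≤ 2 * S.card := by
  classical
  set H := F.induce (S : Set V) with hH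
  haveI : DecidableRel H.Adj := Classical.decRel _
  have hHac : H.IsAcyclic := by
    intro v c hc
    exact hac (c.map (Embedding.induce (G := F) (S : Set V)).toHom)
      ((Walk.map_isCycle_iff_of_injective (Embedding.induce (G := F) (S : Set V)).injective).mpr hc)
  have hcard : ((S ×ˢ S).filter fun p => F.Adj p.1 p.2).card =
      ((univ : Finset (↥(S : Set V) × ↥(S : Set V))).filter fun p => H.Adj p.1 p.2).card := by
    apply Finset.card_bij (fun p hp => (⟨p.1, by
        simpa using (Finset.mem_product.mp (Finset.mem_filter.mp hp).1).1⟩,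
      ⟨p.2, by simpa using (Finset.mem_product.mp (Finset.mem_filter.mp hp).1).2⟩))
    · intro a ha
      simp only [mem_filter, mem_univ, true_and]
      exact (Finset.mem_filter.mp ha).2
    · intro a1 h1 a2 h2 h
      simp only [Prod.mk.injEq, Subtype.mk.injEq] at h
      exact Prod.ext h.1 h.2
    · intro b hb
      refine ⟨(↑b.1, ↑b.2), ?_, rfl⟩
      exact Finset.mem_filter.mpr ⟨Finset.mem_product.mpr ⟨by simp, by simp⟩,
        (Finset.mem_filter.mp hb).2⟩
  have hfil : ((univ : Finset (↥(S : Set V) × ↥(S : Set V))).filter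
        fun (x, y) => H.Adj x y) =
      (univ.filter fun p => H.Adj p.1 p.2) :=
    Finset.filter_congr (fun p _ => by cases p; rfl)
  have h2 : 2 * H.edgeFinset.card =
      ((univ : Finset (↥(S : Set V) × ↥(S : Set V))).filter fun p => H.Adj p.1 p.2).card := by
    rw [← hfil]; exact SimpleGraph.two_mul_card_edgeFinset H
  have hcS : Fintype.card ↥(S : Set V) = S.card := by simp
  have := forest_card_edge H hHac
  omega

lemma arb_pairs_bound {V : Type*} [Fintype V] [DecidableEq V] (G : SimpleGraph V)
    [DecidableRel G.Adj] {lam : ℕ} (harb : HasArboricityAtMost G lam) (S : Finset V) :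
    ((S ×ˢ S).filter fun p => G.Adj p.1 p.2).card ≤ lam * (2 * S.card) := by
  classical
  obtain ⟨F, hFac, -, hFcov⟩ := harb
  haveI : ∀ i, DecidableRel (F i).Adj := fun i => Classical.decRel _
  have hsub : ((S ×ˢ S).filter fun p => G.Adj p.1 p.2) ⊆
      (univ : Finset (Fin lam)).biUnion
        (fun i => (S ×ˢ S).filter fun p => (F i).Adj p.1 p.2) := by
    intro p hp
    obtain ⟨hmem, hadj⟩ := Finset.mem_filter.mp hp
    obtain ⟨i, hi, -⟩ := hFcov s(p.1, p.2) (G.mem_edgeSet.mpr hadj)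
    exact Finset.mem_biUnion.mpr ⟨i, mem_univ _,
      Finset.mem_filter.mpr ⟨hmem, (F i).mem_edgeSet.mp hi⟩⟩
  calc ((S ×ˢ S).filter fun p => G.Adj p.1 p.2).card
      ≤ ((univ : Finset (Fin lam)).biUnion
        (fun i => (S ×ˢ S).filter fun p => (F i).Adj p.1 p.2)).card :=
        Finset.card_le_card hsub
    _ ≤ ∑ i : Fin lam, ((S ×ˢ S).filter fun p => (F i).Adj p.1 p.2).card :=
        Finset.card_biUnion_le
    _ ≤ ∑ _i : Fin lam, 2 * S.card := Finset.sum_le_sum fun i _ =>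
        forest_pairs_bound (F i) (hFac i) S
    _ = lam * (2 * S.card) := by simp [Finset.sum_const, mul_comm]

lemma peel_step {V : Type*} [Fintype V] [DecidableEq V] (G : SimpleGraph V)
    [DecidableRel G.Adj] {lam : ℕ} (harb : HasArboricityAtMost G lam) (d i : ℕ) :
    d * (peel G d (i + 1)).card ≤ 2 * lam * (peel G d i).card := by
  classical
  set S := peel G d i with hS
  set T := peel G d (i + 1) with hT
  have hTsub : T ⊆ S := Finset.filter_subset _ _
  set P := ((T ×ˢ S).filter fun p => G.Adj p.1 p.2) with hP
  have hfib : P.card = ∑ v ∈ T, (G.neighborFinset v ∩ S).card := by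
    rw [Finset.card_eq_sum_card_fiberwise (f := Prod.fst) (t := T)
      (fun p hp => (Finset.mem_product.mp (Finset.mem_filter.mp hp).1).1)]
    refine Finset.sum_congr rfl fun v hv => ?_
    apply Finset.card_bij (fun p _ => p.2)
    · intro a ha
      simp only [Finset.mem_filter, Finset.mem_product, hP] at ha
      rw [Finset.mem_inter, SimpleGraph.mem_neighborFinset]
      exact ⟨ha.2 ▸ ha.1.2, ha.1.1.2⟩
    · intro a1 h1 a2 h2 h
      simp only [Finset.mem_filter, hP] at h1 h2
      exact Prod.ext (h1.2.trans h2.2.symm) h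
    · intro w hw
      rw [Finset.mem_inter, SimpleGraph.mem_neighborFinset] at hw
      exact ⟨(v, w), Finset.mem_filter.mpr
        ⟨Finset.mem_filter.mpr ⟨Finset.mem_product.mpr ⟨hv, hw.2⟩, hw.1⟩, rfl⟩, rfl⟩
  have h1 : (d + 1) * T.card ≤ P.card := by
    rw [hfib]
    calc (d + 1) * T.card = ∑ _v ∈ T, (d + 1) := by
          simp [Finset.sum_const, mul_comm]
      _ ≤ ∑ v ∈ T, (G.neighborFinset v ∩ S).card :=
          Finset.sum_le_sum fun v hv => (Finset.mem_filter.mp hv).2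
  have h2 : P.card ≤ ((S ×ˢ S).filter fun p => G.Adj p.1 p.2).card :=
    Finset.card_le_card (Finset.filter_subset_filter _
      (Finset.product_subset_product hTsub (Finset.Subset.refl S)))
  have h3 := arb_pairs_bound G harb S
  calc d * T.card ≤ (d + 1) * T.card := Nat.mul_le_mul_right _ (Nat.le_succ d)
    _ ≤ lam * (2 * S.card) := le_trans h1 (le_trans h2 h3)
    _ = 2 * lam * S.card := by ring

lemma peel_geom {V : Type*} [Fintype V] [DecidableEq V] (G : SimpleGraph V)
    [DecidableRel G.Adj] {lam : ℕ} (harb : HasArboricityAtMost G lam) (d : ℕ) :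
    ∀ i, (peel G d i).card * d ^ i ≤ Fintype.card V * (2 * lam) ^ i := by
  intro i
  induction i with
  | zero => simp [peel]
  | succ i ih =>
    calc (peel G d (i + 1)).card * d ^ (i + 1)
        = d * (peel G d (i + 1)).card * d ^ i := by ring
      _ ≤ 2 * lam * (peel G d i).card * d ^ i :=
          Nat.mul_le_mul_right _ (peel_step G harb d i)
      _ = 2 * lam * ((peel G d i).card * d ^ i) := by ring
      _ ≤ 2 * lam * (Fintype.card V * (2 * lam) ^ i) := Nat.mul_le_mul_left _ ih
      _ = Fintype.card V * (2 * lam) ^ (i + 1) := by ring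

/-- for a graph on `n ≥ 2` vertices with arboricity at most `lam` and
`d > 2 * lam`, the number `ℓ` of nonempty layers of the H-partition produced by the
greedy peeling algorithm satisfies `ℓ ≤ 1 + log n / log (d / (2 * lam))`. -/
theorem H_partition_number_of_layers {V : Type*} [Fintype V] [DecidableEq V]
    (G : SimpleGraph V) [DecidableRel G.Adj] (n lam d : ℕ)
    (hn : n = Fintype.card V) (h2n : 2 ≤ n) (hlam : 1 ≤ lam)
    (harb : HasArboricityAtMost G lam) (hd : 2 * lam < d) :
    ∃ ℓ : ℕ, peel G d ℓ = ∅ ∧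
      (ℓ : ℝ) ≤ 1 + Real.log n / Real.log ((d : ℝ) / (2 * lam)) := by

  set r : ℝ := (d : ℝ) / (2 * lam) with hr
  have hlam0 : (0 : ℝ) < 2 * lam := by positivity
  have hr1 : 1 < r := by
    rw [hr, lt_div_iff₀ hlam0]
    exact_mod_cast by linarith [hd]
  have hlogr : 0 < Real.log r := Real.log_pos hr1
  have hlogn : 0 ≤ Real.log n := Real.log_nonneg (by exact_mod_cast by omega)
  set x : ℝ := Real.log n / Real.log r with hx
  have hx0 : 0 ≤ x := div_nonneg hlogn hlogr.le
  refine ⟨⌊x⌋₊ + 1, ?_, ?_⟩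
  · set ℓ := ⌊x⌋₊ + 1 with hℓ
    have hgt : x < (ℓ : ℝ) := by
      rw [hℓ]; push_cast; exact Nat.lt_floor_add_one x
    have hrpow : (n : ℝ) < r ^ ℓ := by
      have h1 : Real.log n < ℓ * Real.log r := by
        rw [← div_lt_iff₀ hlogr] at *; exact hgt
      have h2 : Real.log n < Real.log (r ^ ℓ) := by
        rwa [Real.log_pow]
      have hn0 : (0 : ℝ) < n := by exact_mod_cast by omega
      exact (Real.log_lt_log_iff hn0 (pow_pos (lt_trans zero_lt_one hr1) ℓ)).mp h2
    have hgeo := peel_geom G harb d ℓ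
    rw [← hn] at hgeo
    have hreal : ((peel G d ℓ).card : ℝ) * (d : ℝ) ^ ℓ ≤ (n : ℝ) * (2 * lam : ℝ) ^ ℓ := by
      exact_mod_cast hgeo
    have hdp : (0 : ℝ) < (d : ℝ) := by
      have : 0 < d := by omega
      exact_mod_cast this
    have hd0 : (0 : ℝ) < (d : ℝ) ^ ℓ := pow_pos hdp ℓ
    have hlt : (n : ℝ) * (2 * lam : ℝ) ^ ℓ < (d : ℝ) ^ ℓ := by
      have : r ^ ℓ = (d : ℝ) ^ ℓ / (2 * lam : ℝ) ^ ℓ := by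
        rw [hr, div_pow]
      rw [this, lt_div_iff₀ (by positivity)] at hrpow
      linarith [hrpow]
    have hcard : ((peel G d ℓ).card : ℝ) < 1 := by
      have := lt_of_le_of_lt hreal hlt
      nlinarith [hd0]
    have : (peel G d ℓ).card = 0 := by exact_mod_cast Nat.lt_one_iff.mp (by exact_mod_cast hcard)
    exact Finset.card_eq_zero.mp this
  · push_cast
    have := Nat.floor_le hx0
    linarith
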